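/- arXiv:1603.02237 — 2 statements merged into one kernel-verified Lean document; each statement's English description precedes it below -/
import Mathlib

section
/- Let R be a unital non-associative ring (i.e., a not necessarily associative ring with a multiplicative identity 1 ≠ 0). If R is simple, i.e., the only two-sided ideals of R are {0} and R (equivalently, the lattice of two-sided ideals of R is a simple order), then the center Z(R) of R is a field. -/
/-- Proposition 2.1: If `R` is a unital non-associative ring which is simple
(its lattice of two-sided ideals is a simple order), then its center is a field. -/
theorem center_isField_of_simple (R : Type*) [NonAssocRing R] [Nontrivial R]
    (h : IsSimpleOrder (TwoSidedIdeal R)) :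
    letI : CommSemiring (Subsemiring.center R) := Subsemiring.center.commSemiring' R
    IsField (Subsemiring.center R) := by
  letI : CommSemiring (Subsemiring.center R) := Subsemiring.center.commSemiring' R
  refine ⟨⟨0, 1, ?_⟩, mul_comm, ?_⟩
  · intro e
    exact zero_ne_one (congrArg Subtype.val e)
  · rintro ⟨z, hzc⟩ ha
    have hzc' : IsMulCentral z := hzc
    have hz : z ≠ 0 := fun e => ha (Subtype.ext e)
    -- left multiplication by z is injective
    have hlinj : ∀ r : R, z * r = 0 → r = 0 := by
      set K : TwoSidedIdeal R := TwoSidedIdeal.mk' {r | z * r = 0}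
        (by simp) (fun {x y} hx hy => by simp_all [mul_add])
        (fun {x} hx => by simp_all)
        (fun {x y} hy => by
          show z * (x * y) = 0
          rw [hzc'.left_assoc, hzc'.comm, hzc'.mid_assoc, hy, mul_zero])
        (fun {x y} hx => by
          show z * (x * y) = 0
          rw [hzc'.left_assoc, hx, zero_mul]) with hK
      have hKmem : ∀ r : R, r ∈ K ↔ z * r = 0 := fun r => by
        rw [hK, TwoSidedIdeal.mem_mk']; rfl
      rcases h.eq_bot_or_eq_top K with hb | ht
      · intro r hr
        have := (hKmem r).mpr hr
        rw [hb] at this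
        exact (TwoSidedIdeal.mem_bot _).mp this
      · exfalso
        have h1 : z * 1 = 0 := (hKmem 1).mp (by rw [ht]; exact TwoSidedIdeal.mem_top _)
        rw [mul_one] at h1; exact hz h1
    have hlinj' : ∀ r s : R, z * r = z * s → r = s := by
      intro r s hrs
      have : z * (r - s) = 0 := by rw [mul_sub, hrs, sub_self]
      exact sub_eq_zero.mp (hlinj _ this)
    have hrinj' : ∀ r s : R, r * z = s * z → r = s := by
      intro r s hrs
      apply hlinj'
      rw [← hzc'.comm r, ← hzc'.comm s] at hrs
      exact hrs
    -- the image of left multiplication by z is everything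
    obtain ⟨x, hx⟩ : ∃ x : R, z * x = 1 := by
      set I : TwoSidedIdeal R := TwoSidedIdeal.mk' {r | ∃ s, z * s = r}
        (⟨0, mul_zero z⟩)
        (fun {x y} ⟨s, hs⟩ ⟨t, ht⟩ => ⟨s + t, by rw [mul_add, hs, ht]⟩)
        (fun {x} ⟨s, hs⟩ => ⟨-s, by rw [mul_neg, hs]⟩)
        (fun {x y} ⟨s, hs⟩ => ⟨x * s, by
          rw [hzc'.left_assoc, hzc'.comm, hzc'.mid_assoc, hs]⟩)
        (fun {x y} ⟨s, hs⟩ => ⟨s * y, by rw [hzc'.left_assoc, hs]⟩) with hI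
      have hImem : ∀ r : R, r ∈ I ↔ ∃ s, z * s = r := fun r => by
        rw [hI, TwoSidedIdeal.mem_mk']; rfl
      rcases h.eq_bot_or_eq_top I with hb | ht
      · exfalso
        have hzI : z ∈ I := (hImem z).mpr ⟨1, mul_one z⟩
        rw [hb] at hzI
        exact hz ((TwoSidedIdeal.mem_bot _).mp hzI)
      · exact (hImem 1).mp (by rw [ht]; exact TwoSidedIdeal.mem_top _)
    have hxz : x * z = 1 := by rw [← hzc'.comm, hx]
    -- x is central
    have hcomm : ∀ r : R, x * r = r * x := by
      intro r
      apply hlinj'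
      rw [hzc'.left_assoc, hx, one_mul,
        hzc'.left_assoc, hzc'.comm r, hzc'.mid_assoc, hx, mul_one]
    have hxc : x ∈ Subsemiring.center R := by
      refine ⟨fun a => hcomm a, ?_, ?_⟩
      · intro b c
        apply hlinj'
        rw [hzc'.left_assoc x (b * c), hx, one_mul,
          hzc'.left_assoc (x * b) c, hzc'.left_assoc x b, hx, one_mul]
      · intro a b
        apply hrinj'
        rw [hzc'.right_assoc (a * b) x, ← hzc'.comm x, hx, mul_one,
          hzc'.right_assoc a (b * x), hzc'.right_assoc b x,
          ← hzc'.comm x, hx, mul_one]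
    exact ⟨⟨x, hxc⟩, Subtype.ext hx⟩
end

section
/- Let S be a (unital, associative) ring and R a subring of S such that R is a direct summand of S as a left R-module; that is, there exists a left R-submodule T of S with S = R ⊕ T (internally: R ∩ T = {0} and R + T = S). If S is right artinian (respectively, right noetherian), then R is right artinian (respectively, right noetherian). -/
set_option maxHeartbeats 1000000
set_option synthInstance.maxHeartbeats 400000


/-- Proposition 2.3 (second assertion): if a subring `R` of a ring `S` is a direct summand
of `S` as a left `R`-module, and `S` is right artinian (resp. right noetherian), then
`R` is right artinian (resp. right noetherian). -/
theorem right_artinian_noetherian_of_direct_summand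
    (S : Type*) [Ring S] (R : Subring S)
    -- `R` itself, viewed as a left `R`-submodule of `S`
    (M : Submodule ↥R S) (hM : (M : Set S) = (R : Set S))
    -- a complement: `S = R ⊕ T` as left `R`-modules
    (T : Submodule ↥R S) (hMT_inf : M ⊓ T = ⊥) (hMT_sup : M ⊔ T = ⊤) :
    (IsArtinianRing Sᵐᵒᵖ → IsArtinianRing (↥R)ᵐᵒᵖ) ∧
    (IsNoetherianRing Sᵐᵒᵖ → IsNoetherianRing (↥R)ᵐᵒᵖ) := by
  classical
  have hc : IsCompl M T := ⟨disjoint_iff.mpr hMT_inf, codisjoint_iff.mpr hMT_sup⟩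
  set π : S →ₗ[↥R] M := Submodule.linearProjOfIsCompl M T hc with hπ
  have hmemR : ∀ s : S, s ∈ M ↔ s ∈ R := by
    intro s; rw [← SetLike.mem_coe, hM]; rfl
  have hπR : ∀ s : S, s ∈ R → (π s : S) = s := by
    intro s hs
    have hsM : s ∈ M := (hmemR s).mpr hs
    have := Submodule.linearProjOfIsCompl_apply_left hc ⟨s, hsM⟩
    rw [hπ]
    exact congrArg Subtype.val this
  have hπmem : ∀ s : S, (π s : S) ∈ R := fun s => (hmemR _).mp (π s).2
  have hπsmul : ∀ (a : ↥R) (s : S), (π ((a : S) * s) : S) = (a : S) * (π s : S) := by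
    intro a s
    have h1 : (a : S) * s = a • s := rfl
    rw [h1, map_smul]
    rfl
  -- the extension map on right ideals
  set g : Submodule (↥R)ᵐᵒᵖ (↥R)ᵐᵒᵖ → Submodule Sᵐᵒᵖ Sᵐᵒᵖ :=
    fun I => Submodule.span Sᵐᵒᵖ
      ((fun r : (↥R)ᵐᵒᵖ => MulOpposite.op ((r.unop : S))) '' I) with hg
  have hgmono : Monotone g := by
    intro I I' h
    exact Submodule.span_mono (Set.image_mono h)
  -- key: contraction of g I back to R is I
  have hkey : ∀ (I : Submodule (↥R)ᵐᵒᵖ (↥R)ᵐᵒᵖ) (r : ↥R),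
      MulOpposite.op ((r : S)) ∈ g I → MulOpposite.op r ∈ I := by
    intro I r hr
    have main : ∀ y ∈ g I, ∀ s : S,
        ∃ h : ((π (y.unop * s) : S)) ∈ R,
          MulOpposite.op (⟨(π (y.unop * s) : S), h⟩ : ↥R) ∈ I := by
      intro y hy
      induction hy using Submodule.span_induction with
      | mem x hx =>
        obtain ⟨a, ha, rfl⟩ := hx
        intro s
        have h0 : (MulOpposite.op ((a.unop : S))).unop * s = (a.unop : S) * s := rfl
        rw [h0, hπsmul]
        exact ⟨R.mul_mem a.unop.2 (hπmem s),
          I.smul_mem (MulOpposite.op (⟨(π s : S), hπmem s⟩ : ↥R)) ha⟩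
      | zero =>
        intro s
        have h0 : ((0 : Sᵐᵒᵖ)).unop * s = 0 := by simp
        rw [h0, map_zero]
        exact ⟨R.zero_mem, I.zero_mem⟩
      | add x y _ _ hx hy =>
        intro s
        have h0 : ((x + y : Sᵐᵒᵖ)).unop * s = x.unop * s + y.unop * s := by
          simp [add_mul]
        rw [h0, map_add]
        obtain ⟨h1, m1⟩ := hx s
        obtain ⟨h2, m2⟩ := hy s
        exact ⟨R.add_mem h1 h2, I.add_mem m1 m2⟩
      | smul c x _ hx =>
        intro s
        have h0 : ((c • x : Sᵐᵒᵖ)).unop * s = x.unop * (c.unop * s) := by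
          simp [MulOpposite.smul_eq_mul_unop, mul_assoc]
        rw [h0]
        exact hx (c.unop * s)
    obtain ⟨h, m⟩ := main _ hr (1 : S)
    have e2 : ((π ((MulOpposite.op ((r : S))).unop * 1) : S)) = (r : S) := by
      have h1 : (MulOpposite.op ((r : S))).unop * (1 : S) = (r : S) := by simp
      rw [h1]; exact hπR _ r.2
    have e : (⟨_, h⟩ : ↥R) = r := Subtype.ext e2
    rw [e] at m
    exact m
  have hle : ∀ I I' : Submodule (↥R)ᵐᵒᵖ (↥R)ᵐᵒᵖ, g I ≤ g I' → I ≤ I' := by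
    intro I I' h x hx
    have hmem : MulOpposite.op ((x.unop : S)) ∈ g I :=
      Submodule.subset_span ⟨x, hx, rfl⟩
    simpa using hkey I' x.unop (h hmem)
  set f : Submodule (↥R)ᵐᵒᵖ (↥R)ᵐᵒᵖ ↪o Submodule Sᵐᵒᵖ Sᵐᵒᵖ :=
    OrderEmbedding.ofMapLEIff g (fun I I' => ⟨hle I I', fun h => hgmono h⟩) with hf
  constructor
  · intro hS
    rw [IsArtinianRing, isArtinian_iff] at hS ⊢
    exact f.ltEmbedding.wellFounded hS
  · intro hS
    rw [IsNoetherianRing, isNoetherian_iff] at hS ⊢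
    have femb : ((· > ·) : Submodule (↥R)ᵐᵒᵖ (↥R)ᵐᵒᵖ → _ → Prop) ↪r
        ((· > ·) : Submodule Sᵐᵒᵖ Sᵐᵒᵖ → _ → Prop) := ⟨f.toEmbedding, f.lt_iff_lt⟩
    exact femb.wellFounded hS
end
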